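/- If ⋯ ⊆₃ T₃ ⊆₂ T₂ ⊆₁ T₁ ⊆₀ T₀ is an infinite decreasing sequence of wide trees (with T_{n+1} ⊆_n T_n for all n), then T = ⋂_n T_n is a wide tree, and moreover T ⊆_n T_n and BN_n(T) = BN_n(T_{n+1}) for all n. -/

import Mathlib

noncomputable section

/-- The type of countable ordinals, i.e. `ω₁` as a linearly ordered type. -/
abbrev W1 : Type := (Cardinal.aleph 1).ord.ToType

/-- A tree: a set of strings (finite sequences of countable ordinals)
closed under initial segments. -/
def IsTree (T : Set (List W1)) : Prop := ∀ s ∈ T, ∀ t : List W1, t <+: s → t ∈ T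

/-- The set of immediate successors of `s` in `T`. -/
def succs (T : Set (List W1)) (s : List W1) : Set (List W1) :=
  {t ∈ T | s <+: t ∧ t.length = s.length + 1}

/-- Branching nodes of `T`: nodes with at least two immediate successors. -/
def BN (T : Set (List W1)) : Set (List W1) :=
  {s ∈ T | 2 ≤ Cardinal.mk ↥(succs T s)}

/-- Branching nodes of `T` lying strictly below `s`. -/
def belowBN (T : Set (List W1)) (s : List W1) : Set (List W1) :=
  {u ∈ BN T | u <+: s ∧ u ≠ s}

/-- `BN_n(T)`: branching nodes with exactly `n` branching nodes strictly below. -/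
def BNn (T : Set (List W1)) (n : ℕ) : Set (List W1) :=
  {s ∈ BN T | (belowBN T s).Finite ∧ (belowBN T s).ncard = n}

/-- The restricted tree `T↾ₛ`. -/
def restr (T : Set (List W1)) (s : List W1) : Set (List W1) :=
  {t ∈ T | s <+: t ∨ t <+: s}

/-- A wide tree: nonempty tree, every node extends to a branching node,
and every branching node has `ℵ₁`-many immediate successors. -/
def Wide (T : Set (List W1)) : Prop :=
  T.Nonempty ∧ IsTree T ∧ (∀ s ∈ T, ∃ t ∈ BN T, s <+: t) ∧
    ∀ s ∈ BN T, Cardinal.mk ↥(succs T s) = Cardinal.aleph 1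

/-- The initial segment `x↾m` of an infinite sequence. -/
def seg (x : ℕ → W1) (m : ℕ) : List W1 := List.ofFn (fun i : Fin m => x i.1)

/-- `[T]`: the set of infinite branches of `T`. -/
def branches (T : Set (List W1)) : Set (ℕ → W1) := {x | ∀ m, seg x m ∈ T}

/-- `S ⊆_n T` : `BN_n(T) ⊆ S ⊆ T`. -/
def SubN (S T : Set (List W1)) (n : ℕ) : Prop := BNn T n ⊆ S ∧ S ⊆ T

/-- `S ⊆'_n T` : `S ⊆ T` and `BN_{n-1}(S) = BN_{n-1}(T)` (just `⊆` when `n = 0`). -/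
def SubN' (S T : Set (List W1)) (n : ℕ) : Prop :=
  S ⊆ T ∧ ∀ m : ℕ, n = m + 1 → BNn S m = BNn T m

section Aux

lemma length_lt_of_proper {u v : List W1} (h : u <+: v) (hne : u ≠ v) :
    u.length < v.length :=
  lt_of_le_of_ne h.length_le fun hl => hne (h.eq_of_length hl)

lemma prefixes_finite (s : List W1) : {u : List W1 | u <+: s}.Finite := by
  classical
  apply Set.Finite.subset s.inits.toFinset.finite_toSet
  intro u hu
  simpa [List.mem_inits] using hu

lemma belowBN_finite (T : Set (List W1)) (s : List W1) : (belowBN T s).Finite :=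
  (prefixes_finite s).subset fun u hu => hu.2.1

lemma succs_mono {S T : Set (List W1)} (h : S ⊆ T) (s : List W1) :
    succs S s ⊆ succs T s := fun t ht => ⟨h ht.1, ht.2⟩

lemma BN_mono {S T : Set (List W1)} (h : S ⊆ T) : BN S ⊆ BN T := fun s hs =>
  ⟨h hs.1, le_trans hs.2 (Cardinal.mk_le_mk_of_subset (succs_mono h s))⟩

lemma belowBN_mono {S T : Set (List W1)} (h : S ⊆ T) (s : List W1) :
    belowBN S s ⊆ belowBN T s := fun u hu => ⟨BN_mono h hu.1, hu.2⟩

lemma belowBN_trans {T : Set (List W1)} {u v : List W1} (h : v ∈ belowBN T u) :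
    belowBN T v ⊆ belowBN T u := by
  rintro w ⟨hw1, hw2, hw3⟩
  refine ⟨hw1, hw2.trans h.2.1, fun he => ?_⟩
  have h1 := length_lt_of_proper hw2 hw3
  have h2 := length_lt_of_proper h.2.1 h.2.2
  subst he; omega

lemma cnt_lt {T : Set (List W1)} {u v : List W1} (h : v ∈ belowBN T u) :
    (belowBN T v).ncard < (belowBN T u).ncard := by
  apply Set.ncard_lt_ncard _ (belowBN_finite T u)
  constructor
  · exact belowBN_trans h
  · intro hsub
    exact (hsub h).2.2 rfl

lemma belowBN_succ {T : Set (List W1)} {u t : List W1} (hu : u ∈ BN T)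
    (ht : t ∈ succs T u) : belowBN T t = insert u (belowBN T u) := by
  have hlen : t.length = u.length + 1 := ht.2.2
  ext w
  constructor
  · rintro ⟨hwBN, hwp, hwne⟩
    rcases List.prefix_or_prefix_of_prefix hwp ht.2.1 with h | h
    · rcases eq_or_ne w u with rfl | hne
      · exact Set.mem_insert _ _
      · exact Set.mem_insert_of_mem _ ⟨hwBN, h, hne⟩
    · left
      have h1 := length_lt_of_proper hwp hwne
      exact ((h.eq_of_length (le_antisymm h.length_le (by omega))).symm)
  · rintro (rfl | hw)
    · exact ⟨hu, ht.2.1, fun he => by rw [← he] at hlen; omega⟩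
    · refine ⟨hw.1, hw.2.1.trans ht.2.1, fun he => ?_⟩
      have h1 := length_lt_of_proper hw.2.1 hw.2.2
      rw [he] at h1; omega

lemma cnt_succ {T : Set (List W1)} {u t : List W1} (hu : u ∈ BN T)
    (ht : t ∈ succs T u) :
    (belowBN T t).ncard = (belowBN T u).ncard + 1 := by
  rw [belowBN_succ hu ht,
    Set.ncard_insert_of_notMem (fun h => h.2.2 rfl) (belowBN_finite T u)]

lemma exists_cnt_eq {T : Set (List W1)} :
    ∀ n (u : List W1), (belowBN T u).ncard = n →
      ∀ i < n, ∃ v ∈ belowBN T u, (belowBN T v).ncard = i := by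
  intro n
  induction n with
  | zero => intro u _ i hi; omega
  | succ k ih =>
    intro u hu i hi
    have hfin := belowBN_finite T u
    have hne : (belowBN T u).Nonempty := by
      rw [← Set.ncard_pos hfin]; omega
    obtain ⟨v, hv, hmax⟩ := Set.Finite.exists_maximalFor List.length _ hfin hne
    have heq : belowBN T u = insert v (belowBN T v) := by
      ext w
      constructor
      · intro hw
        rcases List.prefix_or_prefix_of_prefix hw.2.1 hv.2.1 with h | h
        · rcases eq_or_ne w v with rfl | hne'
          · exact Set.mem_insert _ _
          · exact Set.mem_insert_of_mem _ ⟨hw.1, h, hne'⟩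
        · left
          exact (h.eq_of_length (le_antisymm h.length_le (hmax hw h.length_le))).symm
      · rintro (rfl | hw)
        · exact hv
        · exact belowBN_trans hv hw
    have hcv : (belowBN T v).ncard = k := by
      rw [heq, Set.ncard_insert_of_notMem (fun h => h.2.2 rfl)
        (belowBN_finite T v)] at hu
      omega
    rcases eq_or_lt_of_le (Nat.lt_succ_iff.mp hi) with h | h
    · exact ⟨v, hv, by omega⟩
    · obtain ⟨w, hw, hcw⟩ := ih v hcv i h
      exact ⟨w, belowBN_trans hv hw, hcw⟩

lemma cnt_le_length (T : Set (List W1)) (s : List W1) :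
    (belowBN T s).ncard ≤ s.length := by
  classical
  have hfin := belowBN_finite T s
  rw [Set.ncard_eq_toFinset_card _ hfin]
  have hinj : Set.InjOn List.length (hfin.toFinset : Set (List W1)) := by
    intro u hu v hv hl
    rw [Finset.mem_coe, Set.Finite.mem_toFinset] at hu hv
    rcases List.prefix_or_prefix_of_prefix hu.2.1 hv.2.1 with h | h
    · exact h.eq_of_length hl
    · exact (h.eq_of_length hl.symm).symm
  have hsub : hfin.toFinset.image List.length ⊆ Finset.range s.length := by
    intro n hn
    simp only [Finset.mem_image, Set.Finite.mem_toFinset] at hn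
    obtain ⟨u, hu, rfl⟩ := hn
    exact Finset.mem_range.mpr (length_lt_of_proper hu.2.1 hu.2.2)
  calc hfin.toFinset.card = (hfin.toFinset.image List.length).card :=
        (Finset.card_image_of_injOn hinj).symm
    _ ≤ (Finset.range s.length).card := Finset.card_le_card hsub
    _ = s.length := Finset.card_range _

lemma two_le_aleph_one : (2 : Cardinal) ≤ Cardinal.aleph 1 :=
  le_trans (by exact_mod_cast (Cardinal.nat_lt_aleph0 2).le)
    (Cardinal.aleph0_le_aleph 1)

lemma BN_succs_nonempty {T : Set (List W1)} {s : List W1} (h : s ∈ BN T) :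
    (succs T s).Nonempty := by
  rw [← Set.nonempty_coe_sort, ← Cardinal.mk_ne_zero_iff]
  intro h0
  have h2 := h.2
  rw [h0] at h2
  simp at h2

lemma exists_minBN {T : Set (List W1)} (hW : Wide T) {s : List W1} (hs : s ∈ T) :
    ∃ v, v ∈ BNn T (belowBN T s).ncard ∧ s <+: v := by
  classical
  obtain ⟨t, htBN, hst⟩ := hW.2.2.1 s hs
  have hQ : ∃ n : ℕ, ∃ v, v ∈ BN T ∧ s <+: v ∧ v.length = n :=
    ⟨t.length, t, htBN, hst, rfl⟩
  obtain ⟨v, hvBN, hsv, hvlen⟩ := Nat.find_spec hQ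
  have hmin : ∀ w, w ∈ BN T → s <+: w → v.length ≤ w.length := by
    intro w hw hsw
    rw [hvlen]
    exact Nat.find_min' hQ ⟨w, hw, hsw, rfl⟩
  have heq : belowBN T v = belowBN T s := by
    ext w
    constructor
    · rintro ⟨hwBN, hwv, hwne⟩
      rcases List.prefix_or_prefix_of_prefix hwv hsv with h | h
      · rcases eq_or_ne w s with rfl | hne
        · exfalso
          have h1 := hmin w hwBN (List.prefix_refl w)
          have h2 := hsv.length_le
          exact hwne (hsv.eq_of_length (by omega))
        · exact ⟨hwBN, h, hne⟩
      · exfalso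
        have h1 := hmin w hwBN h
        have h2 := length_lt_of_proper hwv hwne
        omega
    · rintro ⟨hwBN, hws, hwne⟩
      refine ⟨hwBN, hws.trans hsv, fun he => ?_⟩
      have h1 := length_lt_of_proper hws hwne
      have h2 := hsv.length_le
      subst he; omega
  exact ⟨v, ⟨hvBN, belowBN_finite T v, by rw [heq]⟩, hsv⟩

lemma exists_BNn_ge {T : Set (List W1)} (hW : Wide T) :
    ∀ k {s : List W1}, s ∈ T →
      ∃ v, v ∈ BNn T ((belowBN T s).ncard + k) ∧ s <+: v := by
  intro k
  induction k with
  | zero => intro s hs; simpa using exists_minBN hW hs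
  | succ k ih =>
    intro s hs
    obtain ⟨v, hv, hsv⟩ := exists_minBN hW hs
    obtain ⟨t, ht⟩ := BN_succs_nonempty hv.1
    obtain ⟨w, hw, htw⟩ := ih ht.1
    have hct : (belowBN T t).ncard = (belowBN T s).ncard + 1 := by
      rw [cnt_succ hv.1 ht, hv.2.2]
    rw [hct] at hw
    have harith : (belowBN T s).ncard + 1 + k = (belowBN T s).ncard + (k + 1) := by
      omega
    rw [harith] at hw
    exact ⟨w, hw, hsv.trans (ht.2.1.trans htw)⟩

lemma exists_BNn {T : Set (List W1)} (hW : Wide T) {s : List W1} {n : ℕ}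
    (hs : s ∈ T) (hn : (belowBN T s).ncard ≤ n) :
    ∃ v, v ∈ BNn T n ∧ s <+: v := by
  obtain ⟨v, hv, hsv⟩ := exists_BNn_ge hW (n - (belowBN T s).ncard) hs
  rw [Nat.add_sub_cancel' hn] at hv
  exact ⟨v, hv, hsv⟩

lemma le_ncard_of_hits {A : Set (List W1)} (hA : A.Finite) (g : List W1 → ℕ)
    (j : ℕ) (h : ∀ i < j, ∃ a ∈ A, g a = i) : j ≤ A.ncard := by
  classical
  have hsub : Finset.range j ⊆ hA.toFinset.image g := by
    intro i hi
    obtain ⟨a, ha, rfl⟩ := h i (Finset.mem_range.mp hi)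
    exact Finset.mem_image_of_mem g (hA.mem_toFinset.mpr ha)
  calc j = (Finset.range j).card := (Finset.card_range j).symm
    _ ≤ (hA.toFinset.image g).card := Finset.card_le_card hsub
    _ ≤ hA.toFinset.card := Finset.card_image_le
    _ = A.ncard := (Set.ncard_eq_toFinset_card _ hA).symm

end Aux

section Main

lemma one_step {S T : Set (List W1)} {n : ℕ} (hWT : Wide T) (hTreeS : IsTree S)
    (hBS : BNn T n ⊆ S) (hST : S ⊆ T) :
    ∀ m < n, BNn S m = BNn T m := by
  have ha : ∀ m < n, ∀ u ∈ BNn T m, u ∈ S ∧ succs S u = succs T u := by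
    intro m hmn u hu
    have hsubT : ∀ t ∈ succs T u, t ∈ S := by
      intro t ht
      have hct : (belowBN T t).ncard = m + 1 := by rw [cnt_succ hu.1 ht, hu.2.2]
      obtain ⟨v, hv, htv⟩ := exists_BNn hWT ht.1 (by omega : (belowBN T t).ncard ≤ n)
      exact hTreeS v (hBS hv) t htv
    have huS : u ∈ S := by
      obtain ⟨t, ht⟩ := BN_succs_nonempty hu.1
      exact hTreeS t (hsubT t ht) u ht.2.1
    exact ⟨huS, Set.Subset.antisymm (succs_mono hST u)
      (fun t ht => ⟨hsubT t ht, ht.2⟩)⟩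
  have hb : ∀ m < n, BNn T m ⊆ BNn S m := by
    intro m hmn u hu
    obtain ⟨huS, hsucc⟩ := ha m hmn u hu
    have huBN : u ∈ BN S := ⟨huS, by rw [hsucc]; exact hu.1.2⟩
    have hbel : belowBN S u = belowBN T u := by
      apply Set.Subset.antisymm (belowBN_mono hST u)
      intro w hw
      have hiw : (belowBN T w).ncard < m := by
        rw [← hu.2.2]; exact cnt_lt hw
      obtain ⟨hwS, hwsucc⟩ := ha _ (by omega) w ⟨hw.1, belowBN_finite T w, rfl⟩
      exact ⟨⟨hwS, by rw [hwsucc]; exact hw.1.2⟩, hw.2⟩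
    exact ⟨huBN, belowBN_finite S u, by rw [hbel, hu.2.2]⟩
  intro m hmn
  apply Set.Subset.antisymm _ (hb m hmn)
  intro u hu
  have huT : u ∈ BN T := BN_mono hST hu.1
  have hmk : m ≤ (belowBN T u).ncard := by
    rw [← hu.2.2]
    exact Set.ncard_le_ncard (belowBN_mono hST u) (belowBN_finite T u)
  have hkm : (belowBN T u).ncard ≤ m := by
    by_contra hlt
    push_neg at hlt
    have hhits : ∀ i < min (belowBN T u).ncard n,
        ∃ a ∈ belowBN S u, (belowBN T a).ncard = i := by
      intro i hi
      obtain ⟨w, hw, hcw⟩ := exists_cnt_eq (belowBN T u).ncard u rfl i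
        (lt_of_lt_of_le hi (min_le_left _ _))
      have hwS : w ∈ BNn S i :=
        hb i (lt_of_lt_of_le hi (min_le_right _ _)) ⟨hw.1, belowBN_finite T w, hcw⟩
      exact ⟨w, ⟨hwS.1, hw.2⟩, hcw⟩
    have := le_ncard_of_hits (belowBN_finite S u) _ _ hhits
    rw [hu.2.2] at this
    omega
  exact ⟨huT, belowBN_finite T u, by omega⟩

variable {T : ℕ → Set (List W1)}

lemma T_anti (hdec : ∀ n, SubN (T (n + 1)) (T n) n) :
    ∀ {p q : ℕ}, p ≤ q → T q ⊆ T p := by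
  intro p q hpq
  induction q, hpq using Nat.le_induction with
  | base => exact subset_rfl
  | succ q hq ih => exact Set.Subset.trans (hdec q).2 ih

lemma mem_all (hW : ∀ n, Wide (T n)) (hdec : ∀ n, SubN (T (n + 1)) (T n) n)
    {p : ℕ} {u : List W1} (hu : u ∈ T p) (hc : (belowBN (T p) u).ncard ≤ p) :
    ∀ q, u ∈ T q := by
  have step : ∀ r, u ∈ T r → (belowBN (T r) u).ncard ≤ r →
      u ∈ T (r + 1) ∧ (belowBN (T (r + 1)) u).ncard ≤ r + 1 := by
    intro r hur hcr
    obtain ⟨v, hv, huv⟩ := exists_BNn (hW r) hur hcr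
    have huS : u ∈ T (r + 1) := (hW (r + 1)).2.1 v ((hdec r).1 hv) u huv
    refine ⟨huS, ?_⟩
    have := Set.ncard_le_ncard (belowBN_mono (hdec r).2 u) (belowBN_finite (T r) u)
    omega
  have hall : ∀ j, u ∈ T (p + j) ∧ (belowBN (T (p + j)) u).ncard ≤ p + j := by
    intro j
    induction j with
    | zero => exact ⟨hu, hc⟩
    | succ j ih => exact step (p + j) ih.1 ih.2
  intro q
  rcases le_or_gt p q with h | h
  · obtain ⟨j, rfl⟩ := Nat.exists_eq_add_of_le h
    exact (hall j).1
  · exact T_anti hdec h.le hu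

lemma stable (hW : ∀ n, Wide (T n)) (hdec : ∀ n, SubN (T (n + 1)) (T n) n) :
    ∀ m p, m + 1 ≤ p → ∀ u ∈ BNn (T p) m,
      (∀ q, u ∈ T q) ∧ succs (⋂ n, T n) u = succs (T p) u ∧
        u ∈ BNn (⋂ n, T n) m := by
  intro m
  induction m using Nat.strong_induction_on with
  | _ m ih =>
    intro p hp u hu
    have hcu : (belowBN (T p) u).ncard = m := hu.2.2
    have hmem : ∀ q, u ∈ T q := mem_all hW hdec hu.1.1 (by omega)
    have huI : u ∈ ⋂ n, T n := Set.mem_iInter.mpr hmem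
    have hIsub : (⋂ n, T n) ⊆ T p := Set.iInter_subset _ p
    have hsucc : succs (⋂ n, T n) u = succs (T p) u := by
      apply Set.Subset.antisymm (succs_mono hIsub u)
      intro t ht
      have hct : (belowBN (T p) t).ncard = m + 1 := by
        rw [cnt_succ hu.1 ht, hcu]
      exact ⟨Set.mem_iInter.mpr (mem_all hW hdec ht.1 (by omega)), ht.2⟩
    have huBNI : u ∈ BN (⋂ n, T n) := by
      refine ⟨huI, ?_⟩
      rw [hsucc, (hW p).2.2.2 u hu.1]
      exact two_le_aleph_one
    have hbel : belowBN (⋂ n, T n) u = belowBN (T p) u := by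
      apply Set.Subset.antisymm (belowBN_mono hIsub u)
      intro w hw
      have hiw : (belowBN (T p) w).ncard < m := by
        rw [← hcu]; exact cnt_lt hw
      have hres := ih _ hiw p (by omega) w ⟨hw.1, belowBN_finite _ _, rfl⟩
      exact ⟨hres.2.2.1, hw.2⟩
    exact ⟨hmem, hsucc, huBNI, belowBN_finite _ _, by rw [hbel, hcu]⟩

lemma stableBNn (hW : ∀ n, Wide (T n)) (hdec : ∀ n, SubN (T (n + 1)) (T n) n)
    (n : ℕ) : ∀ p, n + 1 ≤ p → BNn (T p) n = BNn (T (n + 1)) n := by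
  intro p hp
  induction p, hp using Nat.le_induction with
  | base => rfl
  | succ p hp ih =>
    rw [← ih]
    exact one_step (hW p) (hW (p + 1)).2.1 (hdec p).1 (hdec p).2 n (by omega)

end Main

/-- the intersection of a fusion sequence `T_{n+1} ⊆_n T_n` of wide
trees is a wide tree `T` with `T ⊆_n T_n` and `BN_n(T) = BN_n(T_{n+1})`. -/
theorem stmt5 (T : ℕ → Set (List W1)) (hW : ∀ n, Wide (T n))
    (hdec : ∀ n, SubN (T (n + 1)) (T n) n) :
    Wide (⋂ n, T n) ∧ ∀ n, SubN (⋂ n, T n) (T n) n ∧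
      BNn (⋂ n, T n) n = BNn (T (n + 1)) n := by
  have hIsub : ∀ q, (⋂ n, T n) ⊆ T q := fun q => Set.iInter_subset _ q
  have hItree : IsTree (⋂ n, T n) := fun s hs t hts =>
    Set.mem_iInter.mpr fun q => (hW q).2.1 s (Set.mem_iInter.mp hs q) t hts
  have hBNchar : ∀ u ∈ BN (⋂ n, T n),
      (belowBN (T (u.length + 1)) u).ncard + 1 ≤ u.length + 1 ∧
      u ∈ BNn (T (u.length + 1)) ((belowBN (T (u.length + 1)) u).ncard) := by
    intro u hu
    have hup : u ∈ T (u.length + 1) := Set.mem_iInter.mp hu.1 _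
    have huBNp : u ∈ BN (T (u.length + 1)) :=
      ⟨hup, le_trans hu.2 (Cardinal.mk_le_mk_of_subset (succs_mono (hIsub _) u))⟩
    have hcl := cnt_le_length (T (u.length + 1)) u
    exact ⟨by omega, huBNp, belowBN_finite _ _, rfl⟩
  constructor
  · refine ⟨?_, hItree, ?_, ?_⟩
    · refine ⟨[], Set.mem_iInter.mpr fun q => ?_⟩
      obtain ⟨s, hs⟩ := (hW q).1
      exact (hW q).2.1 s hs [] List.nil_prefix
    · intro s hs
      have hsp : s ∈ T (s.length + 1) := Set.mem_iInter.mp hs _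
      obtain ⟨v, hv, hsv⟩ := exists_BNn (hW _) hsp (cnt_le_length _ s)
      exact ⟨v, (stable hW hdec s.length (s.length + 1) le_rfl v hv).2.2.1, hsv⟩
    · intro u hu
      obtain ⟨hle, hu'⟩ := hBNchar u hu
      have hst := stable hW hdec _ _ hle u hu'
      rw [hst.2.1]
      exact (hW _).2.2.2 u hu'.1
  · intro n
    refine ⟨⟨?_, hIsub n⟩, ?_⟩
    · intro u hu
      exact Set.mem_iInter.mpr (mem_all hW hdec hu.1.1 (le_of_eq hu.2.2))
    · apply Set.Subset.antisymm
      · intro u hu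
        obtain ⟨hle, hu'⟩ := hBNchar u hu.1
        have hst := stable hW hdec _ _ hle u hu'
        have hkn : (belowBN (T (u.length + 1)) u).ncard = n := by
          have h1 := hst.2.2.2.2
          have h2 := hu.2.2
          omega
        rw [← stableBNn hW hdec n (u.length + 1) (by omega)]
        rw [hkn] at hu'
        exact hu'
      · intro u hu
        exact (stable hW hdec n (n + 1) le_rfl u hu).2.2

end
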